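/- The vertices of the Voronoï region of the lattice A_n, namely the orthogonal projections p_H(u) for u ∈ {0,1}^{n+1} \ {0, (1,…,1)}, span over ℤ the dual lattice A_n^# = p_H(ℤ^{n+1}). -/

import Mathlib

open Set Filter MeasureTheory Pointwise

/-- The hyperplane `H = {x ∈ ℝ^{n+1} : ∑ xᵢ = 0}`. -/
def Hset (n : ℕ) : Set (Fin (n + 1) → ℝ) := {x | ∑ i, x i = 0}

/-- The root lattice `Aₙ = ℤ^{n+1} ∩ H`. -/
def Alat (n : ℕ) : Set (Fin (n + 1) → ℝ) :=
  {x | (∀ i, ∃ m : ℤ, x i = (m : ℝ)) ∧ ∑ i, x i = 0}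

/-- The Voronoï region of `Aₙ` inside `H`. -/
def VorAn (n : ℕ) : Set (Fin (n + 1) → ℝ) :=
  {z | z ∈ Hset n ∧ ∀ x ∈ Alat n, ∑ i, (z i) ^ 2 ≤ ∑ i, (z i - x i) ^ 2}

/-- Orthogonal projection of `ℝ^{n+1}` onto the hyperplane `H`. -/
noncomputable def pH (n : ℕ) (u : Fin (n + 1) → ℝ) : Fin (n + 1) → ℝ :=
  fun i => u i - (∑ j, u j) / (n + 1)

/-- `V₀ = {0,1}^{n+1} \ {0, (1,…,1)}`. -/
def V0set (n : ℕ) : Set (Fin (n + 1) → ℝ) :=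
  {u | (∀ i, u i = 0 ∨ u i = 1) ∧ u ≠ 0 ∧ u ≠ fun _ => 1}

/-- The vertex set of the Voronoï region of `Aₙ`. -/
noncomputable def VPAn (n : ℕ) : Set (Fin (n + 1) → ℝ) := pH n '' V0set n

noncomputable def pHlin (n : ℕ) : (Fin (n + 1) → ℝ) →ₗ[ℝ] (Fin (n + 1) → ℝ) where
  toFun := pH n
  map_add' u v := by
    funext i
    simp only [pH, Pi.add_apply, Finset.sum_add_distrib]
    ring
  map_smul' c u := by
    funext i
    simp only [pH, Pi.smul_apply, smul_eq_mul, RingHom.id_apply, ← Finset.mul_sum]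
    ring

lemma pH_add (n : ℕ) (u v : Fin (n + 1) → ℝ) : pH n (u + v) = pH n u + pH n v :=
  (pHlin n).map_add u v

lemma pH_smul (n : ℕ) (c : ℝ) (u : Fin (n + 1) → ℝ) : pH n (c • u) = c • pH n u :=
  (pHlin n).map_smul c u

lemma pH_sum_eq_zero (n : ℕ) (u : Fin (n + 1) → ℝ) : ∑ i, pH n u i = 0 := by
  have h : ((n : ℝ) + 1) ≠ 0 := by positivity
  simp only [pH, Finset.sum_sub_distrib, Finset.sum_const, Finset.card_univ,
    Fintype.card_fin, nsmul_eq_mul]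
  push_cast
  field_simp
  ring

/-- The image of the integer vectors under `pH`, as a `ℤ`-submodule. -/
noncomputable def imgSub (n : ℕ) : Submodule ℤ (Fin (n + 1) → ℝ) where
  carrier := pH n '' {u | ∀ i, ∃ m : ℤ, u i = (m : ℝ)}
  zero_mem' := by
    refine ⟨0, fun i => ⟨0, by simp⟩, ?_⟩
    funext i
    simp [pH]
  add_mem' := by
    rintro a b ⟨u, hu, rfl⟩ ⟨v, hv, rfl⟩
    refine ⟨u + v, fun i => ?_, pH_add n u v⟩
    obtain ⟨mu, hmu⟩ := hu i
    obtain ⟨mv, hmv⟩ := hv i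
    exact ⟨mu + mv, by push_cast [Pi.add_apply, hmu, hmv]; ring⟩
  smul_mem' := by
    rintro c a ⟨u, hu, rfl⟩
    refine ⟨(c : ℝ) • u, fun i => ?_, ?_⟩
    · obtain ⟨mu, hmu⟩ := hu i
      exact ⟨c * mu, by push_cast [Pi.smul_apply, smul_eq_mul, hmu]; ring⟩
    · rw [pH_smul, Int.cast_smul_eq_zsmul]

lemma single_mem_V0 (n : ℕ) (hn : 2 ≤ n) (i : Fin (n + 1)) :
    Pi.single i (1 : ℝ) ∈ V0set n := by
  have : Nontrivial (Fin (n + 1)) := Fin.nontrivial_iff_two_le.mpr (by omega)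
  refine ⟨fun j => ?_, ?_, ?_⟩
  · by_cases h : j = i
    · subst h; right; simp
    · left; simp [Pi.single_eq_of_ne h]
  · intro h
    have := congrFun h i
    simp at this
  · intro h
    obtain ⟨j, hj⟩ := exists_ne i
    have := congrFun h j
    simp [Pi.single_eq_of_ne hj] at this

lemma single_eq_smul (c : ℝ) {N : ℕ} (i : Fin N) :
    Pi.single i c = c • (Pi.single i 1 : Fin N → ℝ) := by
  funext j
  by_cases h : j = i
  · subst h; simp
  · simp [Pi.single_eq_of_ne h]

theorem vertices_span_dual_An (n : ℕ) (hn : 2 ≤ n) :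
    (Submodule.span ℤ (VPAn n) : Set (Fin (n + 1) → ℝ))
        = pH n '' {u | ∀ i, ∃ m : ℤ, u i = (m : ℝ)} ∧
    pH n '' {u | ∀ i, ∃ m : ℤ, u i = (m : ℝ)}
        = {y | y ∈ Hset n ∧ ∀ x ∈ Alat n, ∃ m : ℤ, ∑ i, x i * y i = (m : ℝ)} := by
  have hne : ((n : ℝ) + 1) ≠ 0 := by positivity
  constructor
  · -- span of vertices = image of integer vectors
    apply Set.Subset.antisymm
    · -- span ⊆ image
      have h1 : VPAn n ⊆ (imgSub n : Set (Fin (n + 1) → ℝ)) := by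
        rintro _ ⟨u, ⟨hu01, _, _⟩, rfl⟩
        exact ⟨u, fun i => (hu01 i).elim (fun h => ⟨0, by simp [h]⟩)
          (fun h => ⟨1, by simp [h]⟩), rfl⟩
      exact Submodule.span_le.mpr h1
    · -- image ⊆ span
      rintro _ ⟨u, hu, rfl⟩
      choose m hm using hu
      have hrep : u = ∑ i, Pi.single i (u i) := (Finset.univ_sum_single u).symm
      have : pH n u = ∑ i, pH n (Pi.single i (u i)) := by
        have h := map_sum (pHlin n) (fun i => Pi.single i (u i)) Finset.univ
        rw [Finset.univ_sum_single] at h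
        exact h
      rw [this]
      apply Submodule.sum_mem
      intro i _
      have h1 : pH n (Pi.single i (u i)) = m i • pH n (Pi.single i (1 : ℝ)) := by
        rw [single_eq_smul (u i) i, pH_smul, hm i, Int.cast_smul_eq_zsmul]
      rw [h1]
      exact Submodule.smul_mem _ (m i) (Submodule.subset_span
        ⟨Pi.single i (1 : ℝ), single_mem_V0 n hn i, rfl⟩)
  · -- image of integer vectors = dual lattice
    ext y
    constructor
    · rintro ⟨u, hu, rfl⟩
      refine ⟨pH_sum_eq_zero n u, ?_⟩
      rintro x ⟨hxint, hx0⟩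
      choose a ha using hxint
      choose b hb using hu
      refine ⟨∑ i, a i * b i, ?_⟩
      have step : ∀ i, x i * pH n u i = x i * u i - x i * ((∑ j, u j) / (n + 1)) := by
        intro i; unfold pH; ring
      rw [Finset.sum_congr rfl fun i _ => step i, Finset.sum_sub_distrib,
        ← Finset.sum_mul, hx0, zero_mul, sub_zero]
      push_cast
      exact Finset.sum_congr rfl fun i _ => by rw [ha, hb]
    · rintro ⟨hy0, hy⟩
      have hy0' : ∑ i, y i = 0 := hy0
      have hx : ∀ i : Fin (n + 1),
          ((Pi.single i 1 - Pi.single (0 : Fin (n + 1)) 1 : Fin (n + 1) → ℝ)) ∈ Alat n := by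
        intro i
        constructor
        · intro j
          refine ⟨(if j = i then 1 else 0) - (if j = 0 then 1 else 0), ?_⟩
          push_cast
          simp [Pi.single_apply]
        · simp [Pi.single_apply, Finset.sum_sub_distrib]
      have key : ∀ i : Fin (n + 1),
          ∑ j, (Pi.single i 1 - Pi.single (0 : Fin (n + 1)) 1 : Fin (n + 1) → ℝ) j * y j = y i - y 0 := by
        intro i
        have : ∀ j, (Pi.single i 1 - Pi.single (0 : Fin (n + 1)) 1 : Fin (n + 1) → ℝ) j * y j
            = (if j = i then y j else 0) - (if j = 0 then y j else 0) := by
          intro j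
          simp only [Pi.sub_apply, Pi.single_apply]
          split_ifs <;> ring
        rw [Finset.sum_congr rfl fun j _ => this j, Finset.sum_sub_distrib]
        simp
      choose k hk using fun i => hy _ (hx i)
      have hk' : ∀ i, (k i : ℝ) = y i - y 0 := fun i => ((hk i).symm.trans (key i))
      have hsum : ∑ j, ((k j : ℤ) : ℝ) = -(((n : ℝ) + 1) * y 0) := by
        rw [Finset.sum_congr rfl fun j _ => hk' j, Finset.sum_sub_distrib, hy0',
          Finset.sum_const, Finset.card_univ, Fintype.card_fin, nsmul_eq_mul]
        push_cast
        ring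
      refine ⟨fun i => (k i : ℝ), fun i => ⟨k i, rfl⟩, ?_⟩
      funext i
      show (k i : ℝ) - (∑ j, ((k j : ℤ) : ℝ)) / ((n : ℝ) + 1) = y i
      rw [hk' i, hsum]
      field_simp
      ring
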